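/- arXiv:2504.08318 — 3 statements merged into one kernel-verified Lean document; each statement's English description precedes it below -/
import Mathlib

section
/- Let $\Omega'=(0,1)\times(0,l)$, let $q:(0,1)\times(0,l)\to\mathbb{R}$ be measurable, bounded and positive, set $q^\varepsilon(y,s)=q(\varepsilon^{-1}y,s)$ for $(y,s)\in(0,\varepsilon)\times(0,l)$, and set $\kappa(s)=\int_0^1 q(t,s)\,dt$. Then there exists a constant $C>0$, independent of $\varepsilon$, such that for all $\phi\in H^1(\Omega')$, $\left| \varepsilon^{-1} \int_0^\varepsilon \int_0^l q^\varepsilon(y,s)|\phi(y,s)|^2\,ds\,dy - \int_0^l \kappa(s)|\phi(0,s)|^2\,ds \right| \le C\,\varepsilon^{1/2}\,\|\phi\|^2_{H^1(\Omega')}$. -/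
open MeasureTheory Set

private lemma amgm (r a b : ℝ) (hr : 0 < r) : 2 * a * b ≤ r⁻¹ * a ^ 2 + r * b ^ 2 := by
  have h : r⁻¹ * a ^ 2 + r * b ^ 2 - 2 * a * b = (a - r * b) ^ 2 / r := by
    field_simp
    ring
  have h2 : 0 ≤ (a - r * b) ^ 2 / r := div_nonneg (sq_nonneg _) hr.le
  linarith

private lemma integrable_of_bound {X : Type*} [MeasurableSpace X] {μ : Measure X} {S : Set X}
    (hS : MeasurableSet S) (hμ : μ S < ⊤) {f : X → ℝ} (C : ℝ)
    (hf : AEStronglyMeasurable f (μ.restrict S)) (h : ∀ x ∈ S, |f x| ≤ C) :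
    IntegrableOn f S μ := by
  haveI : IsFiniteMeasure (μ.restrict S) := ⟨by rwa [Measure.restrict_apply_univ]⟩
  refine Integrable.mono' (integrable_const C) hf ?_
  filter_upwards [ae_restrict_mem hS] with x hx
  simpa [Real.norm_eq_abs] using h x hx

set_option maxHeartbeats 2000000 in
/-- With `q` measurable, bounded and positive on `(0,1)×(0,l)`,
`qᵉ(y,s) = q(y/ε, s)` and `κ(s) = ∫₀¹ q(t,s) dt`, there is `C > 0` independent of `ε`
such that for all `φ ∈ H¹((0,1)×(0,l))` (formalized, by density, for `C¹` functions)
`|e⁻¹ ∫_{(0,ε)×(0,l)} qᵉ |φ|² - ∫₀^l κ |φ(0,·)|²| ≤ C ε^{1/2} ‖φ‖²_{H¹}`. -/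
theorem averaged_mass_trace_estimate (l : ℝ) (hl : 0 < l)
    (q : ℝ × ℝ → ℝ) (hqm : Measurable q) (Q : ℝ) (hqQ : ∀ p, q p ≤ Q)
    (hqpos : ∀ p, 0 < q p) :
    ∃ C > 0, ∀ ε : ℝ, 0 < ε → ε ≤ 1 → ∀ φ : ℝ × ℝ → ℝ, ContDiff ℝ 1 φ →
      |ε⁻¹ * (∫ y in Ioc (0:ℝ) ε, ∫ s in Ioc (0:ℝ) l, q (y / ε, s) * (φ (y, s))^2)
          - ∫ s in Ioc (0:ℝ) l, (∫ t in Ioc (0:ℝ) 1, q (t, s)) * (φ (0, s))^2|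
        ≤ C * Real.sqrt ε * ((∫ p in Ioo (0:ℝ) 1 ×ˢ Ioo (0:ℝ) l, (φ p)^2)
            + ∫ p in Ioo (0:ℝ) 1 ×ˢ Ioo (0:ℝ) l, ‖fderiv ℝ φ p‖^2) := by
  have hQpos : 0 < Q := lt_of_lt_of_le (hqpos (0, 0)) (hqQ (0, 0))
  refine ⟨2 * Q, by positivity, ?_⟩
  intro ε hε hε1 φ hφ
  have hφc : Continuous φ := hφ.continuous
  have hFc : Continuous (fderiv ℝ φ) := hφ.continuous_fderiv one_ne_zero
  have hφ2c : Continuous fun p : ℝ × ℝ => (φ p) ^ 2 := hφc.pow 2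
  have hF2c : Continuous fun p : ℝ × ℝ => ‖fderiv ℝ φ p‖ ^ 2 := (hFc.norm).pow 2
  have hsε : 0 < Real.sqrt ε := Real.sqrt_pos.2 hε
  have hεs : Real.sqrt ε * Real.sqrt ε = ε := Real.mul_self_sqrt hε.le
  -- finiteness instances
  haveI fin1 : IsFiniteMeasure (volume.restrict (Ioc (0:ℝ) 1)) :=
    ⟨by simp [Measure.restrict_apply_univ, Real.volume_Ioc]⟩
  haveI finl : IsFiniteMeasure (volume.restrict (Ioc (0:ℝ) l)) :=
    ⟨by simp [Measure.restrict_apply_univ, Real.volume_Ioc]⟩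
  haveI finε : IsFiniteMeasure (volume.restrict (Ioc (0:ℝ) ε)) :=
    ⟨by simp [Measure.restrict_apply_univ, Real.volume_Ioc]⟩
  -- the partial derivative in the first variable
  set d : ℝ × ℝ → ℝ := fun p => fderiv ℝ φ p (1, 0) with hd
  have hdc : Continuous d := hFc.clm_apply continuous_const
  have hdle : ∀ p, |d p| ≤ ‖fderiv ℝ φ p‖ := by
    intro p
    have h10 : ‖((1 : ℝ), (0 : ℝ))‖ = 1 := by norm_num [Prod.norm_def]
    have := ContinuousLinearMap.le_opNorm (fderiv ℝ φ p) ((1 : ℝ), (0 : ℝ))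
    simpa [hd, h10, Real.norm_eq_abs] using this
  set gd : ℝ × ℝ → ℝ := fun p => 2 * φ p * d p with hgd
  have hgdc : Continuous gd := (continuous_const.mul hφc).mul hdc
  have hder : ∀ s t : ℝ, HasDerivAt (fun t => (φ (t, s)) ^ 2) (gd (t, s)) t := by
    intro s t
    have h1 : HasFDerivAt φ (fderiv ℝ φ (t, s)) (t, s) :=
      (hφ.differentiable one_ne_zero (t, s)).hasFDerivAt
    have h2 : HasDerivAt (fun t : ℝ => ((t, s) : ℝ × ℝ)) ((1 : ℝ), (0 : ℝ)) t :=
      (hasDerivAt_id t).prodMk (hasDerivAt_const t s)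
    have h3 : HasDerivAt (fun t : ℝ => φ (t, s)) (d (t, s)) t := h1.comp_hasDerivAt t h2
    have h4 := h3.fun_pow 2
    simpa [hgd, mul_comm, mul_assoc, mul_left_comm] using h4
  -- FTC in the first variable
  have hFTC : ∀ s a b : ℝ, (φ (b, s)) ^ 2 - (φ (a, s)) ^ 2 = ∫ x in a..b, gd (x, s) := by
    intro s a b
    refine (intervalIntegral.integral_eq_sub_of_hasDerivAt (fun x _ => hder s x) ?_).symm
    exact (hgdc.comp (continuous_id.prodMk continuous_const)).intervalIntegrable a b
  -- slice integrability
  have hint_abs : ∀ s a b : ℝ, IntegrableOn (fun u => |gd (u, s)|) (Ioc a b) volume :=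
    fun s a b => ((hgdc.comp (continuous_id.prodMk continuous_const)).abs).integrableOn_Ioc
  have hintφ : ∀ s a b : ℝ, IntegrableOn (fun u => (φ (u, s)) ^ 2) (Ioc a b) volume :=
    fun s a b => (hφ2c.comp (continuous_id.prodMk continuous_const)).integrableOn_Ioc
  have hintF : ∀ s a b : ℝ, IntegrableOn (fun u => ‖fderiv ℝ φ (u, s)‖ ^ 2) (Ioc a b) volume :=
    fun s a b => (hF2c.comp (continuous_id.prodMk continuous_const)).integrableOn_Ioc
  set P : ℝ → ℝ := fun s => ∫ u in Ioc (0:ℝ) 1, (φ (u, s)) ^ 2 with hP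
  set G : ℝ → ℝ := fun s => ∫ u in Ioc (0:ℝ) 1, ‖fderiv ℝ φ (u, s)‖ ^ 2 with hG
  have hP0 : ∀ s, 0 ≤ P s := fun s => setIntegral_nonneg measurableSet_Ioc fun u _ => sq_nonneg _
  have hG0 : ∀ s, 0 ≤ G s := fun s => setIntegral_nonneg measurableSet_Ioc fun u _ => sq_nonneg _
  -- pointwise bounds for gd
  have hgd1 : ∀ p : ℝ × ℝ, |gd p| ≤ 2 * |φ p| * ‖fderiv ℝ φ p‖ := by
    intro p
    calc |gd p| = 2 * |φ p| * |d p| := by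
          rw [hgd]; rw [abs_mul, abs_mul]; norm_num
      _ ≤ 2 * |φ p| * ‖fderiv ℝ φ p‖ :=
          mul_le_mul_of_nonneg_left (hdle p) (by positivity)
  have hgdb : ∀ p : ℝ × ℝ, |gd p| ≤ (φ p) ^ 2 + ‖fderiv ℝ φ p‖ ^ 2 := by
    intro p
    have h2 := amgm 1 |φ p| ‖fderiv ℝ φ p‖ one_pos
    have h3 := (hgd1 p).trans h2
    simpa [sq_abs] using h3
  have hgdbw : ∀ p : ℝ × ℝ,
      |gd p| ≤ (Real.sqrt ε)⁻¹ * (φ p) ^ 2 + Real.sqrt ε * ‖fderiv ℝ φ p‖ ^ 2 := by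
    intro p
    have h2 := amgm (Real.sqrt ε) |φ p| ‖fderiv ℝ φ p‖ hsε
    have h3 := (hgd1 p).trans h2
    simpa [sq_abs] using h3
  -- integral of |gd| on a slice
  have habs_int : ∀ s : ℝ, ∫ u in Ioc (0:ℝ) 1, |gd (u, s)| ≤ P s + G s := by
    intro s
    have h1 : ∫ u in Ioc (0:ℝ) 1, |gd (u, s)|
        ≤ ∫ u in Ioc (0:ℝ) 1, ((φ (u, s)) ^ 2 + ‖fderiv ℝ φ (u, s)‖ ^ 2) :=
      setIntegral_mono (hint_abs s 0 1) ((hintφ s 0 1).add (hintF s 0 1))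
        (fun u => hgdb (u, s))
    rwa [integral_add (hintφ s 0 1) (hintF s 0 1)] at h1
  -- sup bound: φ(t,s)² ≤ 2 P s + G s for t ∈ [0,1]
  have hsup : ∀ s : ℝ, ∀ t ∈ Icc (0:ℝ) 1, (φ (t, s)) ^ 2 ≤ 2 * P s + G s := by
    intro s t ht
    have key : ∀ u ∈ Ioc (0:ℝ) 1, (φ (t, s)) ^ 2 - (P s + G s) ≤ (φ (u, s)) ^ 2 := by
      intro u hu
      have hftc := hFTC s u t
      have hsub : uIoc u t ⊆ Ioc (0:ℝ) 1 := by
        intro x hx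
        rcases mem_uIoc.mp hx with ⟨h1, h2⟩ | ⟨h1, h2⟩
        · exact ⟨hu.1.trans h1, h2.trans ht.2⟩
        · exact ⟨lt_of_le_of_lt ht.1 h1, h2.trans hu.2⟩
      have habs : |∫ x in u..t, gd (x, s)| ≤ ∫ x in Ioc (0:ℝ) 1, |gd (x, s)| := by
        rw [intervalIntegral.intervalIntegral_eq_integral_uIoc]
        calc |(if u ≤ t then (1:ℝ) else -1) • ∫ x in uIoc u t, gd (x, s)|
            = |∫ x in uIoc u t, gd (x, s)| := by split_ifs <;> simp
          _ ≤ ∫ x in uIoc u t, |gd (x, s)| := by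
              simpa [Real.norm_eq_abs] using
                norm_integral_le_integral_norm (μ := volume.restrict (uIoc u t))
                  (fun x => gd (x, s))
          _ ≤ ∫ x in Ioc (0:ℝ) 1, |gd (x, s)| :=
              setIntegral_mono_set (hint_abs s 0 1)
                (Filter.Eventually.of_forall fun x => abs_nonneg _)
                (HasSubset.Subset.eventuallyLE hsub)
      have h2 : (φ (t, s)) ^ 2 - (φ (u, s)) ^ 2 ≤ P s + G s := by
        rw [hftc]
        exact le_trans (le_abs_self _) (habs.trans (habs_int s))
      linarith
    have h1 : ∫ _u in Ioc (0:ℝ) 1, ((φ (t, s)) ^ 2 - (P s + G s))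
        ≤ ∫ u in Ioc (0:ℝ) 1, (φ (u, s)) ^ 2 :=
      setIntegral_mono_on (integrable_const _) (hintφ s 0 1) measurableSet_Ioc key
    rw [setIntegral_const] at h1
    simp [Real.volume_Ioc] at h1
    linarith
  -- trace-difference bound
  have hdiff : ∀ s : ℝ, ∀ y ∈ Icc (0:ℝ) ε,
      |(φ (y, s)) ^ 2 - (φ (0, s)) ^ 2| ≤ Real.sqrt ε * (2 * P s + 2 * G s) := by
    intro s y hy
    have hftc := hFTC s 0 y
    have hsub : uIoc 0 y ⊆ Ioc (0:ℝ) ε := by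
      intro x hx
      rcases mem_uIoc.mp hx with ⟨h1, h2⟩ | ⟨h1, h2⟩
      · exact ⟨h1, h2.trans hy.2⟩
      · exact absurd (lt_of_le_of_lt hy.1 h1) (not_lt.mpr h2)
    have habs : |∫ x in (0:ℝ)..y, gd (x, s)| ≤ ∫ x in Ioc (0:ℝ) ε, |gd (x, s)| := by
      rw [intervalIntegral.intervalIntegral_eq_integral_uIoc]
      calc |(if (0:ℝ) ≤ y then (1:ℝ) else -1) • ∫ x in uIoc (0:ℝ) y, gd (x, s)|
          = |∫ x in uIoc (0:ℝ) y, gd (x, s)| := by split_ifs <;> simp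
        _ ≤ ∫ x in uIoc (0:ℝ) y, |gd (x, s)| := by
            simpa [Real.norm_eq_abs] using
              norm_integral_le_integral_norm (μ := volume.restrict (uIoc (0:ℝ) y))
                (fun x => gd (x, s))
        _ ≤ ∫ x in Ioc (0:ℝ) ε, |gd (x, s)| :=
            setIntegral_mono_set (hint_abs s 0 ε)
              (Filter.Eventually.of_forall fun x => abs_nonneg _)
              (HasSubset.Subset.eventuallyLE hsub)
    have h2 : ∫ x in Ioc (0:ℝ) ε, |gd (x, s)|
        ≤ (Real.sqrt ε)⁻¹ * (∫ x in Ioc (0:ℝ) ε, (φ (x, s)) ^ 2)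
          + Real.sqrt ε * (∫ x in Ioc (0:ℝ) ε, ‖fderiv ℝ φ (x, s)‖ ^ 2) := by
      have hgint : IntegrableOn (fun x => (Real.sqrt ε)⁻¹ * (φ (x, s)) ^ 2
          + Real.sqrt ε * ‖fderiv ℝ φ (x, s)‖ ^ 2) (Ioc (0:ℝ) ε) volume :=
        ((hintφ s 0 ε).const_mul _).add ((hintF s 0 ε).const_mul _)
      have h := setIntegral_mono (hint_abs s 0 ε) hgint (fun x => hgdbw (x, s))
      rwa [integral_add ((hintφ s 0 ε).const_mul _) ((hintF s 0 ε).const_mul _),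
        integral_const_mul, integral_const_mul] at h
    have h3 : ∫ x in Ioc (0:ℝ) ε, (φ (x, s)) ^ 2 ≤ ε * (2 * P s + G s) := by
      have hb : ∀ x ∈ Ioc (0:ℝ) ε, (φ (x, s)) ^ 2 ≤ 2 * P s + G s :=
        fun x hx => hsup s x ⟨hx.1.le, hx.2.trans hε1⟩
      calc ∫ x in Ioc (0:ℝ) ε, (φ (x, s)) ^ 2
          ≤ ∫ _x in Ioc (0:ℝ) ε, (2 * P s + G s) :=
            setIntegral_mono_on (hintφ s 0 ε) (integrable_const _) measurableSet_Ioc hb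
        _ = ε * (2 * P s + G s) := by
            rw [setIntegral_const]
            simp [Real.volume_Ioc, ENNReal.toReal_ofReal hε.le, hε.le]
    have h4 : ∫ x in Ioc (0:ℝ) ε, ‖fderiv ℝ φ (x, s)‖ ^ 2 ≤ G s :=
      setIntegral_mono_set (hintF s 0 1)
        (Filter.Eventually.of_forall fun x => sq_nonneg _)
        (HasSubset.Subset.eventuallyLE (Ioc_subset_Ioc le_rfl hε1))
    have h5 : (Real.sqrt ε)⁻¹ * (ε * (2 * P s + G s)) = Real.sqrt ε * (2 * P s + G s) := by
      have h5' : (Real.sqrt ε)⁻¹ * ε = Real.sqrt ε := by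
        rw [inv_mul_eq_div, div_eq_iff hsε.ne']
        exact hεs.symm
      rw [← mul_assoc, h5']
    calc |(φ (y, s)) ^ 2 - (φ (0, s)) ^ 2| = |∫ x in (0:ℝ)..y, gd (x, s)| := by rw [hftc]
      _ ≤ ∫ x in Ioc (0:ℝ) ε, |gd (x, s)| := habs
      _ ≤ (Real.sqrt ε)⁻¹ * (∫ x in Ioc (0:ℝ) ε, (φ (x, s)) ^ 2)
          + Real.sqrt ε * (∫ x in Ioc (0:ℝ) ε, ‖fderiv ℝ φ (x, s)‖ ^ 2) := h2
      _ ≤ (Real.sqrt ε)⁻¹ * (ε * (2 * P s + G s)) + Real.sqrt ε * G s := by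
          have ha := mul_le_mul_of_nonneg_left h3 (inv_nonneg.2 hsε.le)
          have hb := mul_le_mul_of_nonneg_left h4 hsε.le
          linarith
      _ = Real.sqrt ε * (2 * P s + 2 * G s) := by rw [h5]; ring
  -- global bounds from compactness
  have hKc : IsCompact (Icc (0:ℝ) 1 ×ˢ Icc (0:ℝ) l) := isCompact_Icc.prod isCompact_Icc
  obtain ⟨M, hM⟩ := hKc.exists_bound_of_continuousOn hφc.continuousOn
  have hqabs : ∀ p, |q p| ≤ Q := fun p => by rw [abs_of_pos (hqpos p)]; exact hqQ p
  have hbound : ∀ (c a : ℝ), a ∈ Icc (0:ℝ) 1 → ∀ s ∈ Ioc (0:ℝ) l,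
      |q (c, s) * (φ (a, s)) ^ 2| ≤ Q * M ^ 2 := by
    intro c a ha s hs
    have h1 : |φ (a, s)| ≤ M := by
      have := hM (a, s) ⟨ha, ⟨hs.1.le, hs.2⟩⟩
      simpa [Real.norm_eq_abs] using this
    have h2 : |(φ (a, s)) ^ 2| ≤ M ^ 2 := by
      rw [abs_of_nonneg (sq_nonneg _), ← sq_abs]
      exact pow_le_pow_left₀ (abs_nonneg _) h1 2
    rw [abs_mul]
    exact mul_le_mul (hqabs _) h2 (abs_nonneg _) hQpos.le
  -- inner integrability (in s) for fixed y
  have hinner_int : ∀ (c a : ℝ), a ∈ Icc (0:ℝ) 1 →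
      IntegrableOn (fun s => q (c, s) * (φ (a, s)) ^ 2) (Ioc (0:ℝ) l) volume := by
    intro c a ha
    refine integrable_of_bound measurableSet_Ioc
      (by simp [Real.volume_Ioc]) (Q * M ^ 2) ?_ (fun s hs => hbound c a ha s hs)
    exact ((hqm.comp (measurable_const.prodMk measurable_id)).mul
      ((hφc.comp (continuous_const.prodMk continuous_id)).pow 2).measurable).aestronglyMeasurable
  -- finiteness of the product measures
  have hprodfin : ∀ a b : ℝ, (volume.prod volume) (Ioc (0:ℝ) a ×ˢ Ioc (0:ℝ) b) < ⊤ := by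
    intro a b
    rw [Measure.prod_prod]
    exact ENNReal.mul_lt_top (by simp [Real.volume_Ioc]) (by simp [Real.volume_Ioc])
  -- change of variables + Fubini for the κ term
  have hswap_int : Integrable (Function.uncurry fun t s => q (t, s) * (φ (0, s)) ^ 2)
      ((volume.restrict (Ioc (0:ℝ) 1)).prod (volume.restrict (Ioc (0:ℝ) l))) := by
    rw [Measure.prod_restrict]
    refine integrable_of_bound (measurableSet_Ioc.prod measurableSet_Ioc)
      (hprodfin 1 l) (Q * M ^ 2) ?_ ?_
    · refine Measurable.aestronglyMeasurable ?_
      refine Measurable.mul ?_ ?_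
      · exact hqm.comp (measurable_fst.prodMk measurable_snd)
      · exact ((hφc.comp (continuous_const.prodMk continuous_snd)).pow 2).measurable
    · rintro ⟨t, s⟩ ⟨ht, hs⟩
      exact hbound t 0 ⟨le_rfl, zero_le_one⟩ s hs
  have hcv : (∫ y in Ioc (0:ℝ) ε, ∫ s in Ioc (0:ℝ) l, q (y / ε, s) * (φ (0, s)) ^ 2)
      = ε * ∫ s in Ioc (0:ℝ) l, (∫ t in Ioc (0:ℝ) 1, q (t, s)) * (φ (0, s)) ^ 2 := by
    have h1 : (∫ y in Ioc (0:ℝ) ε, ∫ s in Ioc (0:ℝ) l, q (y / ε, s) * (φ (0, s)) ^ 2)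
        = ∫ y in (0:ℝ)..ε, ∫ s in Ioc (0:ℝ) l, q (y / ε, s) * (φ (0, s)) ^ 2 :=
      (intervalIntegral.integral_of_le hε.le).symm
    have h2 := intervalIntegral.integral_comp_div (a := 0) (b := ε) (c := ε)
      (fun t => ∫ s in Ioc (0:ℝ) l, q (t, s) * (φ (0, s)) ^ 2) hε.ne'
    rw [zero_div, div_self hε.ne'] at h2
    rw [h1, h2, intervalIntegral.integral_of_le zero_le_one, smul_eq_mul]
    congr 1
    rw [integral_integral_swap (f := fun t s => q (t, s) * (φ (0, s)) ^ 2) hswap_int]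
    simp only [integral_mul_const]
  -- product integrability of the main integrands
  have hprod_int1 : Integrable (fun p : ℝ × ℝ => q (p.1 / ε, p.2) * (φ p) ^ 2)
      ((volume.restrict (Ioc (0:ℝ) ε)).prod (volume.restrict (Ioc (0:ℝ) l))) := by
    rw [Measure.prod_restrict]
    refine integrable_of_bound (measurableSet_Ioc.prod measurableSet_Ioc)
      (hprodfin ε l) (Q * M ^ 2) ?_ ?_
    · refine Measurable.aestronglyMeasurable ?_
      exact (hqm.comp ((measurable_fst.div_const ε).prodMk measurable_snd)).mul
        hφ2c.measurable
    · rintro ⟨y, s⟩ ⟨hy, hs⟩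
      exact hbound (y / ε) y ⟨hy.1.le, hy.2.trans hε1⟩ s hs
  have hprod_int2 : Integrable (fun p : ℝ × ℝ => q (p.1 / ε, p.2) * (φ (0, p.2)) ^ 2)
      ((volume.restrict (Ioc (0:ℝ) ε)).prod (volume.restrict (Ioc (0:ℝ) l))) := by
    rw [Measure.prod_restrict]
    refine integrable_of_bound (measurableSet_Ioc.prod measurableSet_Ioc)
      (hprodfin ε l) (Q * M ^ 2) ?_ ?_
    · refine Measurable.aestronglyMeasurable ?_
      exact (hqm.comp ((measurable_fst.div_const ε).prodMk measurable_snd)).mul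
        ((hφc.comp (continuous_const.prodMk continuous_snd)).pow 2).measurable
    · rintro ⟨y, s⟩ ⟨hy, hs⟩
      exact hbound (y / ε) 0 ⟨le_rfl, zero_le_one⟩ s hs
  have hF1int : IntegrableOn (fun y => ∫ s in Ioc (0:ℝ) l, q (y / ε, s) * (φ (y, s)) ^ 2)
      (Ioc (0:ℝ) ε) volume := by
    have := hprod_int1.integral_prod_left
    simpa [IntegrableOn] using this
  have hF2int : IntegrableOn (fun y => ∫ s in Ioc (0:ℝ) l, q (y / ε, s) * (φ (0, s)) ^ 2)
      (Ioc (0:ℝ) ε) volume := by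
    have := hprod_int2.integral_prod_left
    simpa [IntegrableOn] using this
  -- Fubini for P and G
  have hswapφ : Integrable (fun p : ℝ × ℝ => (φ (p.2, p.1)) ^ 2)
      ((volume.restrict (Ioc (0:ℝ) l)).prod (volume.restrict (Ioc (0:ℝ) 1))) := by
    rw [Measure.prod_restrict]
    refine integrable_of_bound (measurableSet_Ioc.prod measurableSet_Ioc)
      (hprodfin l 1) (M ^ 2) ?_ ?_
    · exact ((hφc.comp (continuous_snd.prodMk continuous_fst)).pow 2).measurable.aestronglyMeasurable
    · rintro ⟨s, u⟩ ⟨hs, hu⟩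
      have h1 : |φ (u, s)| ≤ M := by
        have := hM (u, s) ⟨⟨hu.1.le, hu.2⟩, ⟨hs.1.le, hs.2⟩⟩
        simpa [Real.norm_eq_abs] using this
      rw [abs_of_nonneg (sq_nonneg _), ← sq_abs]
      exact pow_le_pow_left₀ (abs_nonneg _) h1 2
  have hswapF : Integrable (fun p : ℝ × ℝ => ‖fderiv ℝ φ (p.2, p.1)‖ ^ 2)
      ((volume.restrict (Ioc (0:ℝ) l)).prod (volume.restrict (Ioc (0:ℝ) 1))) := by
    obtain ⟨M2, hM2⟩ := hKc.exists_bound_of_continuousOn hFc.continuousOn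
    rw [Measure.prod_restrict]
    refine integrable_of_bound (measurableSet_Ioc.prod measurableSet_Ioc)
      (hprodfin l 1) (M2 ^ 2) ?_ ?_
    · exact ((hFc.comp (continuous_snd.prodMk continuous_fst)).norm.pow 2).measurable.aestronglyMeasurable
    · rintro ⟨s, u⟩ ⟨hs, hu⟩
      have h1 : ‖fderiv ℝ φ (u, s)‖ ≤ M2 :=
        hM2 (u, s) ⟨⟨hu.1.le, hu.2⟩, ⟨hs.1.le, hs.2⟩⟩
      rw [abs_of_nonneg (sq_nonneg _)]
      exact pow_le_pow_left₀ (norm_nonneg _) h1 2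
  have hPint : Integrable P (volume.restrict (Ioc (0:ℝ) l)) := by
    have := hswapφ.integral_prod_left
    simpa [hP] using this
  have hGint : Integrable G (volume.restrict (Ioc (0:ℝ) l)) := by
    have := hswapF.integral_prod_left
    simpa [hG] using this
  have hA : (∫ s in Ioc (0:ℝ) l, P s) = ∫ p in Ioo (0:ℝ) 1 ×ˢ Ioo (0:ℝ) l, (φ p) ^ 2 := by
    have h1 : (∫ s in Ioc (0:ℝ) l, P s)
        = ∫ u in Ioc (0:ℝ) 1, ∫ s in Ioc (0:ℝ) l, (φ (u, s)) ^ 2 := by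
      rw [hP]
      exact integral_integral_swap (f := fun s u => (φ (u, s)) ^ 2)
        (by exact hswapφ)
    have h2 : (∫ p in Ioo (0:ℝ) 1 ×ˢ Ioo (0:ℝ) l, (φ p) ^ 2)
        = ∫ u in Ioo (0:ℝ) 1, ∫ s in Ioo (0:ℝ) l, (φ (u, s)) ^ 2 := by
      rw [Measure.volume_eq_prod]
      refine setIntegral_prod _ ?_
      rw [← Measure.volume_eq_prod]
      exact (hφ2c.continuousOn.integrableOn_compact hKc).mono_set
        (prod_mono Ioo_subset_Icc_self Ioo_subset_Icc_self)
    rw [h1, h2, integral_Ioc_eq_integral_Ioo]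
    refine integral_congr_ae (Filter.Eventually.of_forall fun u => ?_)
    exact integral_Ioc_eq_integral_Ioo
  have hB : (∫ s in Ioc (0:ℝ) l, G s)
      = ∫ p in Ioo (0:ℝ) 1 ×ˢ Ioo (0:ℝ) l, ‖fderiv ℝ φ p‖ ^ 2 := by
    have h1 : (∫ s in Ioc (0:ℝ) l, G s)
        = ∫ u in Ioc (0:ℝ) 1, ∫ s in Ioc (0:ℝ) l, ‖fderiv ℝ φ (u, s)‖ ^ 2 := by
      rw [hG]
      exact integral_integral_swap (f := fun s u => ‖fderiv ℝ φ (u, s)‖ ^ 2)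
        (by exact hswapF)
    have h2 : (∫ p in Ioo (0:ℝ) 1 ×ˢ Ioo (0:ℝ) l, ‖fderiv ℝ φ p‖ ^ 2)
        = ∫ u in Ioo (0:ℝ) 1, ∫ s in Ioo (0:ℝ) l, ‖fderiv ℝ φ (u, s)‖ ^ 2 := by
      rw [Measure.volume_eq_prod]
      refine setIntegral_prod _ ?_
      rw [← Measure.volume_eq_prod]
      exact (hF2c.continuousOn.integrableOn_compact hKc).mono_set
        (prod_mono Ioo_subset_Icc_self Ioo_subset_Icc_self)
    rw [h1, h2, integral_Ioc_eq_integral_Ioo]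
    refine integral_congr_ae (Filter.Eventually.of_forall fun u => ?_)
    exact integral_Ioc_eq_integral_Ioo
  -- the key slice estimate
  set A' := ∫ s in Ioc (0:ℝ) l, P s with hA'
  set B' := ∫ s in Ioc (0:ℝ) l, G s with hB'
  have hW : (∫ s in Ioc (0:ℝ) l, Q * Real.sqrt ε * (2 * P s + 2 * G s))
      = Q * Real.sqrt ε * (2 * A' + 2 * B') := by
    rw [integral_const_mul]
    congr 1
    rw [integral_add ((hPint.const_mul 2)) ((hGint.const_mul 2)),
      integral_const_mul, integral_const_mul]
  have hkey : ∀ y ∈ Ioc (0:ℝ) ε,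
      |(∫ s in Ioc (0:ℝ) l, q (y / ε, s) * (φ (y, s)) ^ 2)
        - ∫ s in Ioc (0:ℝ) l, q (y / ε, s) * (φ (0, s)) ^ 2|
        ≤ Q * Real.sqrt ε * (2 * A' + 2 * B') := by
    intro y hy
    rw [← integral_sub (hinner_int (y / ε) y ⟨hy.1.le, hy.2.trans hε1⟩)
      (hinner_int (y / ε) 0 ⟨le_rfl, zero_le_one⟩), ← hW]
    have hg_int : Integrable (fun s => Q * Real.sqrt ε * (2 * P s + 2 * G s))
        (volume.restrict (Ioc (0:ℝ) l)) :=
      ((hPint.const_mul 2).add (hGint.const_mul 2)).const_mul _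
    have := norm_integral_le_of_norm_le hg_int (f := fun s =>
        q (y / ε, s) * (φ (y, s)) ^ 2 - q (y / ε, s) * (φ (0, s)) ^ 2) ?_
    · simpa [Real.norm_eq_abs] using this
    filter_upwards [ae_restrict_mem measurableSet_Ioc] with s hs
    have h1 : |q (y / ε, s) * ((φ (y, s)) ^ 2 - (φ (0, s)) ^ 2)|
        ≤ Q * (Real.sqrt ε * (2 * P s + 2 * G s)) := by
      rw [abs_mul]
      exact mul_le_mul (hqabs _) (hdiff s y ⟨hy.1.le, hy.2⟩) (abs_nonneg _) hQpos.le
    calc ‖q (y / ε, s) * (φ (y, s)) ^ 2 - q (y / ε, s) * (φ (0, s)) ^ 2‖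
        = |q (y / ε, s) * ((φ (y, s)) ^ 2 - (φ (0, s)) ^ 2)| := by
          rw [Real.norm_eq_abs, ← mul_sub]
      _ ≤ Q * (Real.sqrt ε * (2 * P s + 2 * G s)) := h1
      _ = Q * Real.sqrt ε * (2 * P s + 2 * G s) := by ring
  -- final assembly
  have hκ : (∫ s in Ioc (0:ℝ) l, (∫ t in Ioc (0:ℝ) 1, q (t, s)) * (φ (0, s)) ^ 2)
      = ε⁻¹ * ∫ y in Ioc (0:ℝ) ε, ∫ s in Ioc (0:ℝ) l, q (y / ε, s) * (φ (0, s)) ^ 2 := by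
    rw [hcv, ← mul_assoc, inv_mul_cancel₀ hε.ne', one_mul]
  rw [hκ, ← mul_sub,
    ← integral_sub hF1int hF2int, abs_mul, abs_of_pos (inv_pos.2 hε)]
  have hb2 : |∫ y in Ioc (0:ℝ) ε,
      ((∫ s in Ioc (0:ℝ) l, q (y / ε, s) * (φ (y, s)) ^ 2)
        - ∫ s in Ioc (0:ℝ) l, q (y / ε, s) * (φ (0, s)) ^ 2)|
      ≤ ε * (Q * Real.sqrt ε * (2 * A' + 2 * B')) := by
    have h := norm_integral_le_of_norm_le (f := fun y =>
        ((∫ s in Ioc (0:ℝ) l, q (y / ε, s) * (φ (y, s)) ^ 2)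
          - ∫ s in Ioc (0:ℝ) l, q (y / ε, s) * (φ (0, s)) ^ 2))
      (integrable_const (μ := volume.restrict (Ioc (0:ℝ) ε))
        (Q * Real.sqrt ε * (2 * A' + 2 * B'))) ?_
    · rw [Real.norm_eq_abs] at h
      refine h.trans (le_of_eq ?_)
      rw [setIntegral_const]
      simp [Real.volume_Ioc, ENNReal.toReal_ofReal hε.le, hε.le]
    filter_upwards [ae_restrict_mem measurableSet_Ioc] with y hy
    simpa [Real.norm_eq_abs] using hkey y hy
  calc ε⁻¹ * |∫ y in Ioc (0:ℝ) ε,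
      ((∫ s in Ioc (0:ℝ) l, q (y / ε, s) * (φ (y, s)) ^ 2)
        - ∫ s in Ioc (0:ℝ) l, q (y / ε, s) * (φ (0, s)) ^ 2)|
      ≤ ε⁻¹ * (ε * (Q * Real.sqrt ε * (2 * A' + 2 * B'))) :=
        mul_le_mul_of_nonneg_left hb2 (inv_nonneg.2 hε.le)
    _ = Q * Real.sqrt ε * (2 * A' + 2 * B') := by
        rw [← mul_assoc, inv_mul_cancel₀ hε.ne', one_mul]
    _ = 2 * Q * Real.sqrt ε
        * ((∫ p in Ioo (0:ℝ) 1 ×ˢ Ioo (0:ℝ) l, (φ p) ^ 2)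
          + ∫ p in Ioo (0:ℝ) 1 ×ˢ Ioo (0:ℝ) l, ‖fderiv ℝ φ p‖ ^ 2) := by
        rw [hA, hB]; ring
end

section
/- Let $L:H\to H$ be a linear, self-adjoint, compact operator on a separable Hilbert space, and let $v_1,\dots,v_J\in H$ and $\mu\in\mathbb{R}$, $r>0$, $\theta\ge 0$, $d>r$ satisfy: $\|Lv_i-\mu v_i\|\le r$ for each $i$, and $|(v_i,v_j)-\delta_{ij}|\le\theta$ for all $i,j=1,\dots,J$. If $r d^{-1}+\theta < J^{-1}$, then the total multiplicity of eigenvalues of $L$ lying in the interval $[\mu-d,\mu+d]$ is at least $J$. -/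
open Module Set
open scoped RealInnerProductSpace

lemma qm_norm_le_of_inner {H : Type*} [NormedAddCommGroup H] [InnerProductSpace ℝ H]
    (T : H →L[ℝ] H) (hsym : LinearMap.IsSymmetric (T : H →ₗ[ℝ] H)) {m : ℝ}
    (h : ∀ x : H, |⟪T x, x⟫| ≤ m * ‖x‖ ^ 2) (x : H) : ‖T x‖ ≤ m * ‖x‖ := by
  by_cases hx : x = 0
  · simp [hx]
  have hn : 0 < ‖x‖ := norm_pos_iff.mpr hx
  have hm : 0 ≤ m := by
    have h0 := le_trans (abs_nonneg _) (h x)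
    nlinarith [pow_pos hn 2]
  by_cases hTx : T x = 0
  · simp [hTx]; positivity
  have ht : 0 < ‖T x‖ := norm_pos_iff.mpr hTx
  have key : ∀ u y : H, ⟪T u, y⟫ ≤ m / 2 * (‖u‖ ^ 2 + ‖y‖ ^ 2) := by
    intro u y
    have hsy : ⟪T y, u⟫ = ⟪T u, y⟫ := (hsym y u).trans (real_inner_comm y (T u)).symm
    have e1 : ⟪T (u + y), u + y⟫ - ⟪T (u - y), u - y⟫ = 4 * ⟪T u, y⟫ := by
      simp only [map_add, map_sub, inner_add_left, inner_add_right, inner_sub_left,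
        inner_sub_right]
      linear_combination 2 * hsy
    have h1 := (abs_le.mp (h (u + y))).2
    have h2 := neg_le.mp (abs_le.mp (h (u - y))).1
    have hpar := parallelogram_law_with_norm ℝ u y
    nlinarith
  set c : ℝ := Real.sqrt (‖T x‖ / ‖x‖) with hc
  have hc2 : c ^ 2 = ‖T x‖ / ‖x‖ := Real.sq_sqrt (by positivity)
  have hcpos : 0 < c := Real.sqrt_pos.mpr (by positivity)
  have hkey := key (c • x) (c⁻¹ • T x)
  rw [map_smul] at hkey
  have hL : ⟪c • T x, c⁻¹ • T x⟫ = ‖T x‖ ^ 2 := by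
    rw [real_inner_smul_left, real_inner_smul_right, real_inner_self_eq_norm_sq]
    field_simp
  rw [hL, norm_smul, norm_smul] at hkey
  have hnc : ‖c‖ = c := abs_of_pos hcpos
  have hnci : ‖c⁻¹‖ = c⁻¹ := abs_of_pos (by positivity)
  rw [hnc, hnci] at hkey
  have hrhs : m / 2 * ((c * ‖x‖) ^ 2 + (c⁻¹ * ‖T x‖) ^ 2) = m * (‖T x‖ * ‖x‖) := by
    have h1 : (c * ‖x‖) ^ 2 = ‖T x‖ * ‖x‖ := by
      rw [mul_pow, hc2]; field_simp
    have h2 : (c⁻¹ * ‖T x‖) ^ 2 = ‖x‖ * ‖T x‖ := by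
      rw [mul_pow, inv_pow, hc2]
      field_simp
    rw [h1, h2]; ring
  rw [hrhs] at hkey
  nlinarith

lemma qm_exists_eigenvector {H : Type*} [NormedAddCommGroup H] [InnerProductSpace ℝ H]
    [CompleteSpace H] [Nontrivial H]
    (T : H →L[ℝ] H) (hsym : LinearMap.IsSymmetric (T : H →ₗ[ℝ] H))
    (hcp : IsCompactOperator T) :
    ∃ (t : ℝ) (w : H), w ≠ 0 ∧ T w = t • w := by
  by_cases hT0 : T = 0
  · obtain ⟨w, hw⟩ := exists_ne (0 : H)
    exact ⟨0, w, hw, by simp [hT0]⟩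
  set M : ℝ := ‖T‖ with hM
  have hMpos : 0 < M := norm_pos_iff.mpr hT0
  -- choose near-maximizing sequence
  have hseq : ∀ n : ℕ, ∃ x : H, ‖x‖ ≤ 1 ∧ M - 1 / (n + 1) < |⟪T x, x⟫| := by
    intro n
    by_contra hcon
    push_neg at hcon
    have hub : ∀ x : H, |⟪T x, x⟫| ≤ (M - 1 / (n + 1)) * ‖x‖ ^ 2 := by
      intro x
      by_cases hx : x = 0
      · simp [hx]
      have hn : 0 < ‖x‖ := norm_pos_iff.mpr hx
      have := hcon (‖x‖⁻¹ • x) (by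
        rw [norm_smul, norm_inv, norm_norm]
        exact le_of_eq (inv_mul_cancel₀ hn.ne'))
      rw [map_smul, real_inner_smul_left, real_inner_smul_right] at this
      rw [abs_mul, abs_mul, abs_inv, abs_norm] at this
      have h2 : |⟪T x, x⟫| ≤ ‖x‖ * (‖x‖ * (M - 1 / (n + 1))) := by
        rw [← mul_le_mul_iff_of_pos_left (inv_pos.mpr hn), ← mul_assoc,
          inv_mul_cancel₀ hn.ne', one_mul]
        calc ‖x‖⁻¹ * |⟪T x, x⟫| = ‖x‖⁻¹ * (‖x‖⁻¹ * |⟪T x, x⟫|) * ‖x‖ := by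
              field_simp
          _ ≤ (M - 1 / (n + 1)) * ‖x‖ := by
              apply mul_le_mul_of_nonneg_right this (norm_nonneg x)
          _ = ‖x‖ * (M - 1 / (n + 1)) := by ring
      calc |⟪T x, x⟫| ≤ ‖x‖ * (‖x‖ * (M - 1 / (n + 1))) := h2
        _ = (M - 1 / (n + 1)) * ‖x‖ ^ 2 := by ring
    have hTle : ‖T‖ ≤ M - 1 / (n + 1) := by
      apply ContinuousLinearMap.opNorm_le_bound
      · have h0 := le_trans (abs_nonneg _) (hub 0)
        by_contra hneg
        push_neg at hneg
        obtain ⟨z, hz⟩ := exists_ne (0 : H)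
        have hzn : 0 < ‖z‖ := norm_pos_iff.mpr hz
        have := le_trans (abs_nonneg _) (hub z)
        nlinarith [pow_pos hzn 2]
      · exact qm_norm_le_of_inner T hsym hub
    have : (0 : ℝ) < 1 / (n + 1) := by positivity
    rw [← hM] at hTle
    linarith
  choose x hx1 hx2 using hseq
  set a : ℕ → ℝ := fun n => ⟪T (x n), x n⟫ with ha
  have haM : ∀ n, |a n| ≤ M := by
    intro n
    calc |a n| ≤ ‖T (x n)‖ * ‖x n‖ := abs_real_inner_le_norm _ _
      _ ≤ (M * ‖x n‖) * 1 := by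
          apply mul_le_mul (T.le_opNorm _) (hx1 n) (norm_nonneg _) (by positivity)
      _ ≤ M * 1 * 1 := by
          have := hx1 n
          nlinarith
      _ = M := by ring
  have habs : Filter.Tendsto (fun n => |a n|) Filter.atTop (nhds M) := by
    apply tendsto_of_tendsto_of_tendsto_of_le_of_le (g := fun n : ℕ => M - 1 / (n + 1))
      (h := fun _ => M)
    · have : Filter.Tendsto (fun n : ℕ => 1 / ((n : ℝ) + 1)) Filter.atTop (nhds 0) :=
        tendsto_one_div_add_atTop_nhds_zero_nat
      simpa using (tendsto_const_nhds.sub this)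
    · exact tendsto_const_nhds
    · exact fun n => (hx2 n).le
    · exact haM
  -- Bolzano–Weierstrass
  obtain ⟨lam, hlammem, φ, hφ, hlam⟩ :=
    tendsto_subseq_of_bounded (Metric.isBounded_Icc (-M) M)
      (fun n => abs_le.mp (haM n) |> fun h => Set.mem_Icc.mpr h)
  have hlamabs : |lam| = M := by
    have h1 : Filter.Tendsto (fun n => |a (φ n)|) Filter.atTop (nhds |lam|) := hlam.abs
    have h2 : Filter.Tendsto (fun n => |a (φ n)|) Filter.atTop (nhds M) :=
      habs.comp hφ.tendsto_atTop
    exact tendsto_nhds_unique h1 h2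
  have hlamne : lam ≠ 0 := fun h => by simp [h] at hlamabs; exact hMpos.ne' hlamabs.symm
  -- compactness
  obtain ⟨K, hK, hKsub⟩ : ∃ K : Set H, IsCompact K ∧ T '' Metric.closedBall 0 1 ⊆ K := by
    obtain ⟨K, hK, hsub⟩ := hcp.image_closedBall_subset_compact 1
    exact ⟨K, hK, hsub⟩
  have hmemK : ∀ n, T (x (φ n)) ∈ K := fun n =>
    hKsub ⟨x (φ n), mem_closedBall_zero_iff.mpr (hx1 _), rfl⟩
  obtain ⟨y, _, ψ, hψ, hy⟩ := hK.tendsto_subseq hmemK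
  set u : ℕ → H := fun n => x (φ (ψ n)) with hu
  have hTu : Filter.Tendsto (fun n => T (u n)) Filter.atTop (nhds y) := hy
  have hau : Filter.Tendsto (fun n => ⟪T (u n), u n⟫) Filter.atTop (nhds lam) :=
    hlam.comp hψ.tendsto_atTop
  -- ‖T u n - lam u n‖² → 0
  have hub2 : ∀ n, ‖T (u n) - lam • u n‖ ^ 2 ≤ 2 * lam ^ 2 - 2 * lam * ⟪T (u n), u n⟫ := by
    intro n
    have e1 : ‖T (u n) - lam • u n‖ ^ 2
        = ‖T (u n)‖ ^ 2 - 2 * (lam * ⟪T (u n), u n⟫) + lam ^ 2 * ‖u n‖ ^ 2 := by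
      rw [@norm_sub_sq_real, real_inner_smul_right, norm_smul]
      rw [Real.norm_eq_abs, mul_pow, sq_abs]
      try ring
    have e2 : ‖T (u n)‖ ^ 2 ≤ lam ^ 2 := by
      have h1 : ‖T (u n)‖ ≤ M * ‖u n‖ := T.le_opNorm _
      have h2 : M * ‖u n‖ ≤ M := by nlinarith [hx1 (φ (ψ n)), hMpos]
      have : ‖T (u n)‖ ≤ M := le_trans h1 h2
      calc ‖T (u n)‖ ^ 2 ≤ M ^ 2 := by nlinarith [norm_nonneg (T (u n))]
        _ = |lam| ^ 2 := by rw [hlamabs]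
        _ = lam ^ 2 := sq_abs lam
    have e3 : lam ^ 2 * ‖u n‖ ^ 2 ≤ lam ^ 2 := by
      have h01 : ‖u n‖ ^ 2 ≤ 1 := by nlinarith [norm_nonneg (u n), hx1 (φ (ψ n))]
      nlinarith [sq_nonneg lam, h01]
    linarith
  have hzero : Filter.Tendsto (fun n => T (u n) - lam • u n) Filter.atTop (nhds 0) := by
    rw [tendsto_zero_iff_norm_tendsto_zero]
    have hsq : Filter.Tendsto (fun n => ‖T (u n) - lam • u n‖ ^ 2) Filter.atTop (nhds 0) := by
      apply tendsto_of_tendsto_of_tendsto_of_le_of_le (g := fun _ : ℕ => (0:ℝ))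
        (h := fun n => 2 * lam ^ 2 - 2 * lam * ⟪T (u n), u n⟫)
      · exact tendsto_const_nhds
      · have : Filter.Tendsto (fun n => 2 * lam ^ 2 - 2 * lam * ⟪T (u n), u n⟫)
            Filter.atTop (nhds (2 * lam ^ 2 - 2 * lam * lam)) :=
          tendsto_const_nhds.sub ((hau.const_mul _))
        convert this using 2
        ring
      · exact fun n => sq_nonneg _
      · exact hub2
    have := hsq.sqrt
    simpa [Real.sqrt_sq (norm_nonneg _)] using this
  have hlamu : Filter.Tendsto (fun n => lam • u n) Filter.atTop (nhds y) := by
    have : Filter.Tendsto (fun n => T (u n) - (T (u n) - lam • u n)) Filter.atTop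
        (nhds (y - 0)) := hTu.sub hzero
    simpa using this
  have huconv : Filter.Tendsto u Filter.atTop (nhds (lam⁻¹ • y)) := by
    have := hlamu.const_smul lam⁻¹
    simpa [smul_smul, inv_mul_cancel₀ hlamne] using this
  refine ⟨lam, lam⁻¹ • y, ?_, ?_⟩
  · have hynorm : |lam| ≤ ‖y‖ := by
      have h1 : Filter.Tendsto (fun n => ‖T (u n)‖) Filter.atTop (nhds ‖y‖) := hTu.norm
      have h2 : Filter.Tendsto (fun n => |⟪T (u n), u n⟫|) Filter.atTop (nhds |lam|) := hau.abs
      apply le_of_tendsto_of_tendsto h2 h1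
      filter_upwards with n
      calc |⟪T (u n), u n⟫| ≤ ‖T (u n)‖ * ‖u n‖ := abs_real_inner_le_norm _ _
        _ ≤ ‖T (u n)‖ * 1 := by
            apply mul_le_mul_of_nonneg_left (hx1 _) (norm_nonneg _)
        _ = ‖T (u n)‖ := mul_one _
    have hy0 : y ≠ 0 := by
      intro h
      rw [h, norm_zero] at hynorm
      exact hlamne (abs_nonpos_iff.mp hynorm)
    exact smul_ne_zero (inv_ne_zero hlamne) hy0
  · have hTcont : Filter.Tendsto (fun n => T (u n)) Filter.atTop (nhds (T (lam⁻¹ • y))) :=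
      (T.continuous.tendsto _).comp huconv
    have : T (lam⁻¹ • y) = y := tendsto_nhds_unique hTcont hTu
    rw [this, smul_smul, mul_inv_cancel₀ hlamne, one_smul]

lemma qm_dense_eigenspaces {H : Type*} [NormedAddCommGroup H] [InnerProductSpace ℝ H]
    [CompleteSpace H]
    (T : H →L[ℝ] H) (hsym : LinearMap.IsSymmetric (T : H →ₗ[ℝ] H))
    (hcp : IsCompactOperator T) :
    (⨆ t : ℝ, Module.End.eigenspace (T : H →ₗ[ℝ] H) t)ᗮ = ⊥ := by
  set F := (⨆ t : ℝ, Module.End.eigenspace (T : H →ₗ[ℝ] H) t)ᗮ with hF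
  by_contra hne
  -- F is a nontrivial closed invariant subspace
  haveI : Nontrivial F := Submodule.nontrivial_iff_ne_bot.mpr hne
  have hInv : ∀ v ∈ F, T v ∈ F := fun v hv =>
    hsym.orthogonalComplement_iSup_eigenspaces_invariant hv
  set Tlin : F →ₗ[ℝ] F := (T : H →ₗ[ℝ] H).restrict hInv with hTlin
  have hbound : ∀ x : F, ‖Tlin x‖ ≤ ‖T‖ * ‖x‖ := by
    intro x
    have : ‖Tlin x‖ = ‖T (x : H)‖ := rfl
    rw [this]
    exact T.le_opNorm _
  set T' : F →L[ℝ] F := LinearMap.mkContinuous Tlin ‖T‖ hbound with hT'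
  have hcoe : (T' : F →ₗ[ℝ] F) = Tlin := rfl
  have hsym' : LinearMap.IsSymmetric (T' : F →ₗ[ℝ] F) := by
    rw [hcoe]
    exact hsym.restrict_invariant hInv
  have hcp' : IsCompactOperator T' := by
    have : IsCompactOperator ((T : H →ₗ[ℝ] H) : H → H) := hcp
    exact this.restrict' hInv
  obtain ⟨t, w, hw0, hTw⟩ := qm_exists_eigenvector T' hsym' hcp'
  have hmem : (w : H) ∈ Module.End.eigenspace (T : H →ₗ[ℝ] H) t := by
    rw [Module.End.mem_eigenspace_iff]
    have : ((T' w : F) : H) = ((t • w : F) : H) := congrArg _ hTw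
    simp at this; exact this
  have hmem' : (w : H) ∈ ⨆ t : ℝ, Module.End.eigenspace (T : H →ₗ[ℝ] H) t :=
    Submodule.mem_iSup_of_mem t hmem
  have hzero : ⟪(w : H), (w : H)⟫ = 0 := w.2 _ hmem'
  exact hw0 (Subtype.coe_injective (by simpa using inner_self_eq_zero.mp hzero))

lemma qm_approx {H : Type*} [NormedAddCommGroup H] [InnerProductSpace ℝ H] [CompleteSpace H]
    (L : H →L[ℝ] H) (hsym : LinearMap.IsSymmetric (L : H →ₗ[ℝ] H)) (hcp : IsCompactOperator L)
    {μ r d : ℝ} (hd : 0 < d) (v : H) (hres : ‖L v - μ • v‖ ≤ r)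
    {ε : ℝ} (hε : 0 < ε) :
    ∃ a ∈ (⨆ t ∈ Icc (μ - d) (μ + d),
        Module.End.eigenspace (L : H →ₗ[ℝ] H) t).topologicalClosure,
      ‖v - a‖ ≤ r / d + ε := by
  classical
  have htop : (⨆ t : ℝ, Module.End.eigenspace (L : H →ₗ[ℝ] H) t).topologicalClosure = ⊤ := by
    rw [← Submodule.orthogonal_orthogonal_eq_closure, qm_dense_eigenspaces L hsym hcp,
      Submodule.bot_orthogonal_eq_top]
  set C : ℝ := 1 + d⁻¹ * (‖L‖ + |μ|) with hC
  have hCpos : 0 < C := by positivity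
  set δ : ℝ := ε / C with hδ
  have hδpos : 0 < δ := by positivity
  have hvcl : v ∈ closure ((⨆ t : ℝ, Module.End.eigenspace (L : H →ₗ[ℝ] H) t : Submodule ℝ H)
      : Set H) := by
    have h := Submodule.eq_top_iff'.mp htop v
    exact h
  obtain ⟨w, hwmem, hwd⟩ := Metric.mem_closure_iff.mp hvcl δ hδpos
  obtain ⟨f, hfsum⟩ := (Submodule.mem_iSup_iff_exists_dfinsupp' _ w).mp hwmem
  rw [DFinsupp.sum] at hfsum
  set s := f.support with hs
  set p : ℝ → Prop := fun t => t ∈ Icc (μ - d) (μ + d) with hp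
  set sI := s.filter p with hsI
  set sO := s.filter (fun t => ¬ p t) with hsO
  set a : H := ∑ t ∈ sI, ((f t : H)) with ha
  set b : H := ∑ t ∈ sO, ((f t : H)) with hb
  have hab : a + b = w := by
    rw [ha, hb, Finset.sum_filter_add_sum_filter_not]
    exact hfsum
  have hamem : a ∈ (⨆ t ∈ Icc (μ - d) (μ + d),
      Module.End.eigenspace (L : H →ₗ[ℝ] H) t).topologicalClosure := by
    apply Submodule.le_topologicalClosure
    apply Submodule.sum_mem
    intro t ht
    rw [hsI, Finset.mem_filter] at ht
    exact Submodule.mem_iSup_of_mem t (Submodule.mem_iSup_of_mem ht.2 (f t).2)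
  have hof := hsym.orthogonalFamily_eigenspaces
  -- eigenvector action
  have heig : ∀ t : ℝ, L ((f t : H)) = t • ((f t : H)) := by
    intro t
    have := (f t).2
    rw [Module.End.mem_eigenspace_iff] at this
    simpa using this
  have himg : ∀ (u : Finset ℝ), L (∑ t ∈ u, ((f t : H))) - μ • (∑ t ∈ u, ((f t : H)))
      = ∑ t ∈ u, ((t - μ) • ((f t : H))) := by
    intro u
    rw [map_sum, Finset.smul_sum, ← Finset.sum_sub_distrib]
    apply Finset.sum_congr rfl
    intro t _
    rw [heig t, sub_smul]
  -- norm computations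
  have hnorm : ∀ (u : Finset ℝ) (l : ∀ t : ℝ, Module.End.eigenspace (L : H →ₗ[ℝ] H) t),
      ‖∑ t ∈ u, ((l t : H))‖ ^ 2 = ∑ t ∈ u, ‖(l t : H)‖ ^ 2 := by
    intro u l
    have := hof.norm_sum l u
    simpa using this
  have hb2 : ‖b‖ ^ 2 = ∑ t ∈ sO, ‖((f t : H))‖ ^ 2 := hnorm sO (fun t => f t)
  have hLw2 : ‖L w - μ • w‖ ^ 2 = ∑ t ∈ s, (t - μ) ^ 2 * ‖((f t : H))‖ ^ 2 := by
    rw [← hfsum, himg s]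
    have := hnorm s (fun t => (t - μ) • f t)
    simp only [Submodule.coe_smul] at this
    rw [this]
    apply Finset.sum_congr rfl
    intro t _
    rw [norm_smul, Real.norm_eq_abs, mul_pow, sq_abs]
  have hkey : d ^ 2 * ‖b‖ ^ 2 ≤ ‖L w - μ • w‖ ^ 2 := by
    rw [hb2, hLw2, Finset.mul_sum]
    calc ∑ t ∈ sO, d ^ 2 * ‖((f t : H))‖ ^ 2
        ≤ ∑ t ∈ sO, (t - μ) ^ 2 * ‖((f t : H))‖ ^ 2 := by
          apply Finset.sum_le_sum
          intro t ht
          rw [hsO, Finset.mem_filter] at ht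
          have htI : ¬ (μ - d ≤ t ∧ t ≤ μ + d) := by
            intro hcon
            exact ht.2 (Set.mem_Icc.mpr hcon)
          have : d ^ 2 ≤ (t - μ) ^ 2 := by
            rcases not_and_or.mp htI with h | h
            · push_neg at h; nlinarith
            · push_neg at h; nlinarith
          nlinarith [sq_nonneg ‖((f t : H))‖]
      _ ≤ ∑ t ∈ s, (t - μ) ^ 2 * ‖((f t : H))‖ ^ 2 := by
          apply Finset.sum_le_sum_of_subset_of_nonneg (Finset.filter_subset _ _)
          intro t _ _
          positivity
  have hbn : ‖b‖ ≤ d⁻¹ * ‖L w - μ • w‖ := by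
    have h1 : (d * ‖b‖) ^ 2 ≤ ‖L w - μ • w‖ ^ 2 := by nlinarith
    have h2 : d * ‖b‖ ≤ ‖L w - μ • w‖ := by
      nlinarith [norm_nonneg (L w - μ • w), mul_nonneg hd.le (norm_nonneg b)]
    rw [← mul_le_mul_iff_of_pos_left hd, ← mul_assoc, mul_inv_cancel₀ hd.ne', one_mul]
    exact h2
  have hwv : ‖w - v‖ < δ := by
    rw [← dist_eq_norm]
    rw [dist_comm]
    exact hwd
  have hLwv : ‖L w - μ • w‖ ≤ r + (‖L‖ + |μ|) * δ := by
    have e : L w - μ • w = (L v - μ • v) + (L (w - v) - μ • (w - v)) := by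
      rw [map_sub, smul_sub]; abel
    rw [e]
    calc ‖(L v - μ • v) + (L (w - v) - μ • (w - v))‖
        ≤ ‖L v - μ • v‖ + ‖L (w - v) - μ • (w - v)‖ := norm_add_le _ _
      _ ≤ r + (‖L (w - v)‖ + ‖μ • (w - v)‖) := by
          gcongr
          exact norm_sub_le _ _
      _ ≤ r + (‖L‖ * ‖w - v‖ + |μ| * ‖w - v‖) := by
          gcongr
          · exact L.le_opNorm _
          · rw [norm_smul, Real.norm_eq_abs]
      _ ≤ r + (‖L‖ * δ + |μ| * δ) := by
          have h1 : ‖L‖ * ‖w - v‖ ≤ ‖L‖ * δ := mul_le_mul_of_nonneg_left hwv.le (norm_nonneg _)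
          have h2 : |μ| * ‖w - v‖ ≤ |μ| * δ := mul_le_mul_of_nonneg_left hwv.le (abs_nonneg _)
          linarith
      _ = r + (‖L‖ + |μ|) * δ := by ring
  refine ⟨a, hamem, ?_⟩
  have hva : v - a = (v - w) + b := by
    rw [← hab]; abel
  calc ‖v - a‖ = ‖(v - w) + b‖ := by rw [hva]
    _ ≤ ‖v - w‖ + ‖b‖ := norm_add_le _ _
    _ ≤ δ + d⁻¹ * (r + (‖L‖ + |μ|) * δ) := by
        have h1 : ‖v - w‖ ≤ δ := by rw [norm_sub_rev]; exact hwv.le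
        have h2 : ‖b‖ ≤ d⁻¹ * (r + (‖L‖ + |μ|) * δ) :=
          le_trans hbn (mul_le_mul_of_nonneg_left hLwv (inv_nonneg.mpr hd.le))
        linarith
    _ = r / d + δ * C := by
        rw [hC]
        field_simp
        ring
    _ = r / d + ε := by
        rw [hδ]
        field_simp
  

/-- A family of `J` quasimodes `(μ, v₁), …, (μ, v_J)` with error `r` and
deviation from orthogonality `θ` such that `r d⁻¹ + θ < J⁻¹` forces the total multiplicity of
the eigenvalues of the compact self-adjoint operator `L` in `[μ-d, μ+d]` (the dimension of the
range of the spectral projection onto that interval) to be at least `J`. -/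
theorem quasimode_family_multiplicity
    {H : Type*} [NormedAddCommGroup H] [InnerProductSpace ℝ H] [CompleteSpace H]
    [TopologicalSpace.SeparableSpace H]
    (L : H →L[ℝ] H) (hsa : IsSelfAdjoint L) (hcp : IsCompactOperator L)
    (J : ℕ) (v : Fin J → H) (μ r θ d : ℝ) (hr : 0 < r) (hθ : 0 ≤ θ) (hd : r < d)
    (hres : ∀ i, ‖L (v i) - μ • v i‖ ≤ r)
    (hortho : ∀ i j, |⟪v i, v j⟫ - (if i = j then (1:ℝ) else 0)| ≤ θ)
    (hsmall : r * d⁻¹ + θ < (J : ℝ)⁻¹) :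
    (J : Cardinal) ≤ Module.rank ℝ
      ((⨆ t ∈ Icc (μ - d) (μ + d),
        Module.End.eigenspace (L : H →ₗ[ℝ] H) t).topologicalClosure) := by
  classical
  rcases Nat.eq_zero_or_pos J with hJ0 | hJpos
  · subst hJ0; simp
  have hd0 : 0 < d := hr.trans hd
  have hsym : LinearMap.IsSymmetric (L : H →ₗ[ℝ] H) := hsa.isSymmetric
  set E := (⨆ t ∈ Icc (μ - d) (μ + d),
      Module.End.eigenspace (L : H →ₗ[ℝ] H) t).topologicalClosure with hE
  haveI : CompleteSpace E := (Submodule.isClosed_topologicalClosure _).completeSpace_coe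
  set u : Fin J → E := fun i => E.orthogonalProjectionOnto (v i) with hu
  set e : Fin J → H := fun i => v i - ↑(u i) with he
  have hePerp : ∀ i, e i ∈ Eᗮ := fun i => Submodule.sub_starProjection_mem_orthogonal _
  set ρ : ℝ := r / d with hρ
  have hρpos : 0 < ρ := by positivity
  have hρlt1 : ρ ≤ 1 := by
    rw [hρ, div_le_one hd0]; exact hd.le
  -- the quasimodes are close to their projections
  have he_norm : ∀ i, ‖e i‖ ≤ ρ := by
    intro i
    refine le_of_forall_pos_le_add ?_
    intro ε hε
    obtain ⟨a, hamem, hale⟩ := qm_approx L hsym hcp hd0 (v i) (hres i) hε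
    -- minimality of the orthogonal projection
    have hmin : ‖e i‖ ≤ ‖v i - a‖ := by
      have hdecomp : v i - a = e i + ((u i : H) - a) := by rw [he]; exact (sub_add_sub_cancel _ _ _).symm
      have hmem2 : (u i : H) - a ∈ E := Submodule.sub_mem _ (u i).2 hamem
      have hzero : ⟪e i, (u i : H) - a⟫ = 0 := by
        rw [real_inner_comm]
        exact (hePerp i) _ hmem2
      have hsq : ‖v i - a‖ ^ 2 = ‖e i‖ ^ 2 + ‖(u i : H) - a‖ ^ 2 := by
        rw [hdecomp, @norm_add_sq_real, hzero]
        ring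
      nlinarith [norm_nonneg (v i - a), norm_nonneg (e i), sq_nonneg ‖(u i : H) - a‖]
    calc ‖e i‖ ≤ ‖v i - a‖ := hmin
      _ ≤ r / d + ε := hale
      _ = ρ + ε := by rw [hρ]
  -- Gram matrix estimate
  have hinner_uu : ∀ i j, ⟪(u i : H), (u j : H)⟫ = ⟪v i, v j⟫ - ⟪e i, e j⟫ := by
    intro i j
    have hvi : v i = (u i : H) + e i := by simp [he]
    have hvj : v j = (u j : H) + e j := by simp [he]
    have hc1 : ⟪(u i : H), e j⟫ = 0 := (hePerp j) _ (u i).2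
    have hc2 : ⟪e i, (u j : H)⟫ = 0 := by
      rw [real_inner_comm]
      exact (hePerp i) _ (u j).2
    have hexp : ⟪v i, v j⟫ = ⟪(u i : H), (u j : H)⟫ + ⟪e i, e j⟫ := by
      conv_lhs => rw [hvi, hvj]
      rw [inner_add_left, inner_add_right, inner_add_right, hc1, hc2]
      ring
    linarith
  have hGram : ∀ i j, |⟪(u i : H), (u j : H)⟫ - (if i = j then (1:ℝ) else 0)| ≤ θ + ρ := by
    intro i j
    rw [hinner_uu i j]
    have h1 : |⟪e i, e j⟫| ≤ ρ := by
      calc |⟪e i, e j⟫| ≤ ‖e i‖ * ‖e j‖ := abs_real_inner_le_norm _ _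
        _ ≤ ρ * ρ := by
            apply mul_le_mul (he_norm i) (he_norm j) (norm_nonneg _) hρpos.le
        _ ≤ 1 * ρ := by nlinarith
        _ = ρ := one_mul _
    calc |⟪v i, v j⟫ - ⟪e i, e j⟫ - (if i = j then (1:ℝ) else 0)|
        = |(⟪v i, v j⟫ - (if i = j then (1:ℝ) else 0)) + (- ⟪e i, e j⟫)| := by congr 1; ring
      _ ≤ |⟪v i, v j⟫ - (if i = j then (1:ℝ) else 0)| + |⟪e i, e j⟫| := by
          apply le_trans (abs_add_le _ _)
          rw [abs_neg]
      _ ≤ θ + ρ := add_le_add (hortho i j) h1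
  have hJeps : (J : ℝ) * (θ + ρ) < 1 := by
    have h1 : θ + ρ < (J : ℝ)⁻¹ := by
      rw [hρ, div_eq_mul_inv]; linarith
    have hJR : (0 : ℝ) < J := Nat.cast_pos.mpr hJpos
    calc (J : ℝ) * (θ + ρ) < (J : ℝ) * (J : ℝ)⁻¹ := by
          apply mul_lt_mul_of_pos_left h1 hJR
      _ = 1 := mul_inv_cancel₀ hJR.ne'
  -- linear independence
  have hli : LinearIndependent ℝ u := by
    rw [Fintype.linearIndependent_iff]
    intro g hg
    have hg' : ∑ i, g i • (u i : H) = 0 := by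
      have := congrArg (Subtype.val : E → H) hg
      push_cast at this
      simpa using this
    obtain ⟨j, _, hjmax⟩ := Finset.exists_max_image Finset.univ (fun i => |g i|)
      ⟨⟨0, hJpos⟩, Finset.mem_univ _⟩
    have hgj0 : g j = 0 := by
      by_contra hgj
      have hgjpos : 0 < |g j| := abs_pos.mpr hgj
      have h0 : ∑ i, g i * ⟪(u j : H), (u i : H)⟫ = 0 := by
        have : ⟪(u j : H), ∑ i, g i • (u i : H)⟫ = 0 := by rw [hg']; simp
        rw [inner_sum] at this
        simpa only [real_inner_smul_right, mul_comm] using this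
      have hsplit : ∑ i, g i * ⟪(u j : H), (u i : H)⟫
          = g j + ∑ i, g i * (⟪(u j : H), (u i : H)⟫ - (if j = i then (1:ℝ) else 0)) := by
        have : ∑ i, g i * (⟪(u j : H), (u i : H)⟫ - (if j = i then (1:ℝ) else 0))
            = ∑ i, g i * ⟪(u j : H), (u i : H)⟫
              - ∑ i, (if j = i then g i else 0) := by
          rw [← Finset.sum_sub_distrib]
          apply Finset.sum_congr rfl
          intro i _
          by_cases h : j = i <;> simp [h] <;> ring
        rw [this, Finset.sum_ite_eq]
        simp
      have hgj_eq : g j = - ∑ i, g i * (⟪(u j : H), (u i : H)⟫ - (if j = i then (1:ℝ) else 0)) := by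
        rw [hsplit] at h0
        linarith
      have habs : |g j| ≤ (J : ℝ) * (|g j| * (θ + ρ)) := by
        calc |g j|
            = |∑ i, g i * (⟪(u j : H), (u i : H)⟫ - (if j = i then (1:ℝ) else 0))| := by
              rw [hgj_eq, abs_neg]
          _ ≤ ∑ i, |g i * (⟪(u j : H), (u i : H)⟫ - (if j = i then (1:ℝ) else 0))| :=
              Finset.abs_sum_le_sum_abs _ _
          _ ≤ ∑ _i : Fin J, |g j| * (θ + ρ) := by
              apply Finset.sum_le_sum
              intro i _
              rw [abs_mul]
              have hg1 : |g i| ≤ |g j| := hjmax i (Finset.mem_univ i)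
              have hg2 : |⟪(u j : H), (u i : H)⟫ - (if j = i then (1:ℝ) else 0)| ≤ θ + ρ := by
                have := hGram j i
                simpa [eq_comm] using this
              exact mul_le_mul hg1 hg2 (abs_nonneg _) (abs_nonneg _)
          _ = (J : ℝ) * (|g j| * (θ + ρ)) := by
              rw [Finset.sum_const, Finset.card_univ, Fintype.card_fin, nsmul_eq_mul]
      nlinarith
    intro i
    have hmx := hjmax i (Finset.mem_univ i)
    rw [hgj0] at hmx
    simpa using abs_nonpos_iff.mp (by simpa using hmx)
  have hcard := hli.cardinal_lift_le_rank
  rw [Cardinal.mk_fin] at hcard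
  simpa using hcard
end

section
/- Let $\Omega'=(0,1)\times(0,l)$ and $\omega^\varepsilon=(0,\varepsilon)\times(0,l)$. Suppose $u^\varepsilon\in H^1(\Omega')$ satisfies $\|u^\varepsilon\|_{H^1(\Omega')}\le 1$ and $\varepsilon^{-1}\int_{\omega^\varepsilon}|u^\varepsilon|^2\,dx \le c_1\varepsilon^{m-1}$ for some $m>1$ and $c_1>0$. Then there is a constant $c_2>0$ independent of $\varepsilon$ such that the trace satisfies $\int_0^l |u^\varepsilon(0,s)|^2\,ds \le c_2(\varepsilon^{m-1}+\varepsilon^{1/2})$. -/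
open MeasureTheory Set

lemma intOn_box (f : ℝ×ℝ → ℝ) (hf : Continuous f) (a b c d : ℝ) :
    IntegrableOn f (Ioo a b ×ˢ Ioo c d) := by
  have h1 : IntegrableOn f (Icc (a,c) (b,d)) :=
    hf.continuousOn.integrableOn_compact isCompact_Icc
  apply h1.mono_set
  intro p hp
  rw [← Icc_prod_Icc]
  exact ⟨Ioo_subset_Icc_self hp.1, Ioo_subset_Icc_self hp.2⟩

lemma swap_eq (f : ℝ×ℝ → ℝ) (hf : Continuous f) (a b c d : ℝ) :
    ∫ s in Ioo c d, ∫ y in Ioo a b, f (y, s) = ∫ p in Ioo a b ×ˢ Ioo c d, f p := by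
  have hint : IntegrableOn f (Ioo a b ×ˢ Ioo c d) := intOn_box f hf a b c d
  have hswap : IntegrableOn (fun p : ℝ × ℝ => f (p.2, p.1)) (Ioo c d ×ˢ Ioo a b) :=
    intOn_box _ (hf.comp continuous_swap) c d a b
  rw [Measure.volume_eq_prod] at hint hswap ⊢
  rw [MeasureTheory.setIntegral_prod f hint]
  rw [MeasureTheory.integral_integral_swap]
  rw [Measure.prod_restrict]
  exact hswap

lemma int_prod_left (f : ℝ×ℝ → ℝ) (hf : Continuous f) (a b c d : ℝ) :
    IntegrableOn (fun s => ∫ y in Ioo a b, f (y, s)) (Ioo c d) := by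
  have hint : IntegrableOn f (Ioo a b ×ˢ Ioo c d) := intOn_box f hf a b c d
  rw [Measure.volume_eq_prod, IntegrableOn, ← Measure.prod_restrict] at hint
  exact hint.integral_prod_right

lemma pointwise_est (u : ℝ×ℝ→ℝ) (hu : ContDiff ℝ 1 u) (ε δ : ℝ) (hε : 0 < ε) (hδ : 0 < δ)
    (s : ℝ) :
    (u (0,s))^2 ≤ ∫ y in Ioo 0 ε,
      ((ε⁻¹+δ⁻¹)*(u (y,s))^2 + δ*‖fderiv ℝ u (y,s)‖^2) := by
  set g : ℝ → ℝ := fun t => (u (t,s))^2 with hg_def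
  set g' : ℝ → ℝ := fun t => 2 * u (t,s) * (fderiv ℝ u (t,s)) (1,0) with hg'_def
  set k : ℝ → ℝ := fun t => δ⁻¹ * (u (t,s))^2 + δ * ‖fderiv ℝ u (t,s)‖^2 with hk_def
  have hu_cont : Continuous u := hu.continuous
  have hD_cont : Continuous (fun p => fderiv ℝ u p) := hu.continuous_fderiv one_ne_zero
  have hcurve : Continuous (fun t : ℝ => (t, s)) := continuous_id.prodMk continuous_const
  have hag : ∀ t, HasDerivAt g (g' t) t := by
    intro t
    have h1 : HasDerivAt (fun r : ℝ => (r, s)) ((1:ℝ), (0:ℝ)) t :=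
      (hasDerivAt_id t).prodMk (hasDerivAt_const t s)
    have h2 : HasDerivAt (fun r => u (r, s)) ((fderiv ℝ u (t,s)) (1,0)) t :=
      ((hu.differentiable one_ne_zero (t,s)).hasFDerivAt).comp_hasDerivAt t h1
    have h3 := h2.fun_pow 2
    simpa [g, g', mul_comm, mul_assoc, mul_left_comm] using h3
  have hcg' : Continuous g' := by
    apply Continuous.mul
    · exact continuous_const.mul (hu_cont.comp hcurve)
    · exact (hD_cont.comp hcurve).clm_apply continuous_const
  have hck : Continuous k := by
    apply Continuous.add
    · exact continuous_const.mul ((hu_cont.comp hcurve).pow 2)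
    · exact continuous_const.mul (((hD_cont.comp hcurve).norm).pow 2)
  have hknn : ∀ t, 0 ≤ k t := by
    intro t
    have : (0:ℝ) ≤ δ⁻¹ := inv_nonneg.mpr hδ.le
    positivity
  have hbound : ∀ t, |g' t| ≤ k t := by
    intro t
    set D := fderiv ℝ u (t,s) with hD
    have h1 : |D (1,0)| ≤ ‖D‖ := by
      calc |D (1,0)| = ‖D (1,0)‖ := (Real.norm_eq_abs _).symm
        _ ≤ ‖D‖ * ‖((1:ℝ),(0:ℝ))‖ := D.le_opNorm _
        _ = ‖D‖ := by simp [Prod.norm_def]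
    have h2 : |g' t| ≤ 2 * |u (t,s)| * ‖D‖ := by
      rw [hg'_def]
      simp only [abs_mul, abs_two]
      have := abs_nonneg (u (t,s))
      nlinarith [abs_nonneg (D (1,0))]
    have h3 : 2 * |u (t,s)| * ‖D‖ ≤ δ⁻¹ * (u (t,s))^2 + δ * ‖D‖^2 := by
      have hsq : 0 ≤ δ⁻¹ * (|u (t,s)| - δ * ‖D‖)^2 := by positivity
      have hcan : δ * δ⁻¹ = 1 := mul_inv_cancel₀ hδ.ne'
      nlinarith [sq_abs (u (t,s))]
    exact h2.trans (by simpa [k] using h3)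
  have hkint : IntegrableOn k (Ioo 0 ε) := hck.integrableOn_Ioc.mono_set Ioo_subset_Ioc_self
  set C : ℝ := ∫ t in Ioo 0 ε, k t with hC
  have hyb : ∀ y ∈ Ioo (0:ℝ) ε, g 0 ≤ g y + C := by
    intro y hy
    have hFTC : ∫ t in (0:ℝ)..y, g' t = g y - g 0 :=
      intervalIntegral.integral_eq_sub_of_hasDerivAt (fun t _ => hag t)
        (hcg'.intervalIntegrable 0 y)
    have h0y : (0:ℝ) ≤ y := hy.1.le
    have habs : |∫ t in Ioc (0:ℝ) y, g' t| ≤ ∫ t in Ioc (0:ℝ) y, |g' t| := by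
      calc |∫ t in Ioc (0:ℝ) y, g' t| = ‖∫ t in Ioc (0:ℝ) y, g' t‖ := (Real.norm_eq_abs _).symm
        _ ≤ ∫ t in Ioc (0:ℝ) y, ‖g' t‖ := norm_integral_le_integral_norm _
        _ = ∫ t in Ioc (0:ℝ) y, |g' t| := by simp [Real.norm_eq_abs]
    have hmono1 : ∫ t in Ioc (0:ℝ) y, |g' t| ≤ ∫ t in Ioc (0:ℝ) y, k t := by
      apply setIntegral_mono_on
      · exact (hcg'.abs).integrableOn_Ioc
      · exact hck.integrableOn_Ioc
      · exact measurableSet_Ioc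
      · exact fun t _ => hbound t
    have hmono2 : ∫ t in Ioc (0:ℝ) y, k t ≤ C := by
      apply setIntegral_mono_set hkint
      · exact Filter.Eventually.of_forall fun t => hknn t
      · apply HasSubset.Subset.eventuallyLE
        intro t ht
        exact ⟨ht.1, lt_of_le_of_lt ht.2 hy.2⟩
    have heq : ∫ t in (0:ℝ)..y, g' t = ∫ t in Ioc (0:ℝ) y, g' t :=
      intervalIntegral.integral_of_le h0y
    have : g 0 = g y - ∫ t in Ioc (0:ℝ) y, g' t := by rw [← heq, hFTC]; ring
    rw [this]
    have := neg_abs_le (∫ t in Ioc (0:ℝ) y, g' t)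
    linarith [habs, hmono1, hmono2]
  have hgint : IntegrableOn (fun y => g y) (Ioo 0 ε) :=
    ((hu_cont.comp hcurve).pow 2).integrableOn_Ioc.mono_set Ioo_subset_Ioc_self
  have havg : ε * g 0 ≤ (∫ y in Ioo 0 ε, g y) + ε * C := by
    have h1 : ∫ (_ : ℝ) in Ioo 0 ε, g 0 ≤ ∫ y in Ioo 0 ε, (g y + C) := by
      apply setIntegral_mono_on
      · exact integrableOn_const (by simp [Real.volume_Ioo])
      · exact hgint.add (integrableOn_const (by simp [Real.volume_Ioo]))
      · exact measurableSet_Ioo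
      · exact hyb
    have h2 : ∫ (_ : ℝ) in Ioo 0 ε, g 0 = ε * g 0 := by
      simp [Real.volume_Ioo, ENNReal.toReal_ofReal hε.le, smul_eq_mul, hε.le]
    have h3 : ∫ y in Ioo 0 ε, (g y + C) = (∫ y in Ioo 0 ε, g y) + ε * C := by
      rw [integral_add hgint (integrableOn_const (by simp [Real.volume_Ioo]))]
      simp [Real.volume_Ioo, ENNReal.toReal_ofReal hε.le, smul_eq_mul, hε.le]
    rw [h2, h3] at h1
    exact h1
  have hfinal : g 0 ≤ ε⁻¹ * (∫ y in Ioo 0 ε, g y) + C := by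
    have h2 := mul_le_mul_of_nonneg_left havg (inv_nonneg.mpr hε.le)
    rw [mul_add, ← mul_assoc, ← mul_assoc, inv_mul_cancel₀ hε.ne', one_mul, one_mul] at h2
    exact h2
  have hsplit : ∫ y in Ioo 0 ε, ((ε⁻¹+δ⁻¹)*(u (y,s))^2 + δ*‖fderiv ℝ u (y,s)‖^2)
      = ε⁻¹ * (∫ y in Ioo 0 ε, g y) + C := by
    have heqf : ∀ y ∈ Ioo (0:ℝ) ε,
        (ε⁻¹+δ⁻¹)*(u (y,s))^2 + δ*‖fderiv ℝ u (y,s)‖^2 = ε⁻¹ * g y + k y := by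
      intro y _; simp only [g, k]; ring
    rw [setIntegral_congr_fun measurableSet_Ioo heqf,
      integral_add (hgint.const_mul _) hkint, integral_const_mul]
  rw [hsplit]
  exact hfinal


/-- If `u^ε ∈ H¹((0,1)×(0,l))` (formalized, by density, for `C¹` functions,
with the `H¹` norm squared written as `∫ u² + ∫ ‖∇u‖²`) satisfies `‖u^ε‖_{H¹} ≤ 1` and
`ε⁻¹ ∫_{(0,ε)×(0,l)} |u^ε|² ≤ c₁ ε^{m-1}` with `m > 1`, then the trace on `{y=0}` satisfies
`∫₀^l |u^ε(0,s)|² ds ≤ c₂ (ε^{m-1} + ε^{1/2})` with `c₂` independent of `ε`. -/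
theorem trace_smallness_estimate (l m c₁ : ℝ) (hl : 0 < l) (hm : 1 < m) (hc₁ : 0 < c₁) :
    ∃ c₂ > 0, ∀ ε : ℝ, 0 < ε → ε ≤ 1 → ∀ u : ℝ × ℝ → ℝ, ContDiff ℝ 1 u →
      ((∫ p in Ioo (0:ℝ) 1 ×ˢ Ioo (0:ℝ) l, (u p)^2)
          + (∫ p in Ioo (0:ℝ) 1 ×ˢ Ioo (0:ℝ) l, ‖fderiv ℝ u p‖^2) ≤ 1) →
      (ε⁻¹ * ∫ p in Ioo (0:ℝ) ε ×ˢ Ioo (0:ℝ) l, (u p)^2 ≤ c₁ * ε ^ (m - 1)) →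
      (∫ s in Ioc (0:ℝ) l, (u (0, s))^2) ≤ c₂ * (ε ^ (m - 1) + Real.sqrt ε) := by
  refine ⟨c₁ + 1, by linarith, ?_⟩
  intro ε hε hε1 u hu hH1 hsmall
  set δ : ℝ := Real.sqrt ε with hδ_def
  have hδ : 0 < δ := Real.sqrt_pos.mpr hε
  have hδδ : δ * δ = ε := Real.mul_self_sqrt hε.le
  have hu_cont : Continuous u := hu.continuous
  have hD_cont : Continuous (fun p => fderiv ℝ u p) := hu.continuous_fderiv one_ne_zero
  set F : ℝ×ℝ → ℝ := fun p => (u p)^2 with hF_def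
  set G : ℝ×ℝ → ℝ := fun p => ‖fderiv ℝ u p‖^2 with hG_def
  have hF_cont : Continuous F := hu_cont.pow 2
  have hG_cont : Continuous G := (hD_cont.norm).pow 2
  set h : ℝ×ℝ → ℝ := fun p => (ε⁻¹+δ⁻¹)*F p + δ*G p with hh_def
  have hh_cont : Continuous h :=
    (continuous_const.mul hF_cont).add (continuous_const.mul hG_cont)
  -- step 1-2: trace ≤ iterated integral of h
  have step1 : (∫ s in Ioc (0:ℝ) l, (u (0, s))^2)
      ≤ ∫ s in Ioo (0:ℝ) l, (∫ y in Ioo (0:ℝ) ε, h (y, s)) := by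
    rw [integral_Ioc_eq_integral_Ioo]
    apply setIntegral_mono_on
    · exact ((hu_cont.comp (continuous_const.prodMk continuous_id)).pow 2).integrableOn_Ioc.mono_set
        Ioo_subset_Ioc_self
    · exact int_prod_left h hh_cont 0 ε 0 l
    · exact measurableSet_Ioo
    · intro s _
      exact pointwise_est u hu ε δ hε hδ s
  -- step 3: iterated = product
  have step2 : ∫ s in Ioo (0:ℝ) l, (∫ y in Ioo (0:ℝ) ε, h (y, s))
      = ∫ p in Ioo (0:ℝ) ε ×ˢ Ioo (0:ℝ) l, h p := swap_eq h hh_cont 0 ε 0 l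
  -- step 4: split
  set A : ℝ := ∫ p in Ioo (0:ℝ) ε ×ˢ Ioo (0:ℝ) l, F p with hA_def
  set B : ℝ := ∫ p in Ioo (0:ℝ) ε ×ˢ Ioo (0:ℝ) l, G p with hB_def
  have step3 : ∫ p in Ioo (0:ℝ) ε ×ˢ Ioo (0:ℝ) l, h p = (ε⁻¹+δ⁻¹) * A + δ * B := by
    rw [hh_def]
    rw [integral_add ((intOn_box F hF_cont 0 ε 0 l).const_mul _)
      ((intOn_box G hG_cont 0 ε 0 l).const_mul _), integral_const_mul, integral_const_mul]
  -- bounds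
  have hAnn : 0 ≤ A := setIntegral_nonneg (measurableSet_Ioo.prod measurableSet_Ioo)
    (fun p _ => sq_nonneg _)
  have hA : A ≤ c₁ * ε ^ (m-1) * ε := by
    have h2 := mul_le_mul_of_nonneg_left hsmall hε.le
    rw [← mul_assoc, mul_inv_cancel₀ hε.ne', one_mul] at h2
    nlinarith
  have hB : B ≤ 1 := by
    have hsub : Ioo (0:ℝ) ε ×ˢ Ioo (0:ℝ) l ⊆ Ioo (0:ℝ) 1 ×ˢ Ioo (0:ℝ) l :=
      prod_mono (Ioo_subset_Ioo_right hε1) subset_rfl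
    have hmono : B ≤ ∫ p in Ioo (0:ℝ) 1 ×ˢ Ioo (0:ℝ) l, G p := by
      apply setIntegral_mono_set (intOn_box G hG_cont 0 1 0 l)
      · exact Filter.Eventually.of_forall fun p => sq_nonneg _
      · exact HasSubset.Subset.eventuallyLE hsub
    have hFnn : 0 ≤ ∫ p in Ioo (0:ℝ) 1 ×ˢ Ioo (0:ℝ) l, F p :=
      setIntegral_nonneg (measurableSet_Ioo.prod measurableSet_Ioo) (fun p _ => sq_nonneg _)
    linarith [hH1]
  -- final arithmetic
  have hpow1 : ε ^ (m-1) ≤ 1 := Real.rpow_le_one hε.le hε1 (by linarith)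
  have hpownn : 0 ≤ ε ^ (m-1) := Real.rpow_nonneg hε.le _
  have hinv1 : ε⁻¹ * ε = 1 := inv_mul_cancel₀ hε.ne'
  have hinv2 : δ⁻¹ * ε = δ := by
    rw [← hδδ, ← mul_assoc, inv_mul_cancel₀ hδ.ne', one_mul]
  have hεinn : 0 ≤ ε⁻¹ := inv_nonneg.mpr hε.le
  have hδinn : 0 ≤ δ⁻¹ := inv_nonneg.mpr hδ.le
  have hmain : (ε⁻¹+δ⁻¹) * A + δ * B ≤ (c₁+1) * (ε ^ (m-1) + δ) := by
    have h1 : (ε⁻¹+δ⁻¹) * A ≤ (ε⁻¹+δ⁻¹) * (c₁ * ε ^ (m-1) * ε) :=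
      mul_le_mul_of_nonneg_left hA (by linarith)
    have h2 : δ * B ≤ δ * 1 := mul_le_mul_of_nonneg_left hB hδ.le
    have h3 : (ε⁻¹+δ⁻¹) * (c₁ * ε ^ (m-1) * ε) = c₁ * ε ^ (m-1) + c₁ * ε ^ (m-1) * δ := by
      rw [show (ε⁻¹+δ⁻¹) * (c₁ * ε ^ (m-1) * ε)
          = c₁ * ε ^ (m-1) * (ε⁻¹ * ε) + c₁ * ε ^ (m-1) * (δ⁻¹ * ε) from by ring,
        hinv1, hinv2, mul_one]
    nlinarith [mul_le_mul_of_nonneg_left hpow1 hc₁.le, hδ.le]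
  calc (∫ s in Ioc (0:ℝ) l, (u (0, s))^2)
      ≤ ∫ s in Ioo (0:ℝ) l, (∫ y in Ioo (0:ℝ) ε, h (y, s)) := step1
    _ = (ε⁻¹+δ⁻¹) * A + δ * B := by rw [step2, step3]
    _ ≤ (c₁+1) * (ε ^ (m-1) + δ) := hmain
end
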